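/- Let A be a feasible tree solution and F a feasible solution with V[A]=V[F]. If e,f ∈ A are compatible w.r.t. F and f,g ∈ A are compatible w.r.t. F, then e and g are compatible w.r.t. F. In particular, the compatibility relation ~cp is an equivalence relation on the edges of A. -/

import Mathlib

open Finset

attribute [local instance] Classical.propDecidable

variable {V : Type*} [Fintype V] [DecidableEq V]

/-- The simple graph on `V` induced by a finite set of (undirected) edges. -/
def graphOf (F : Finset (Sym2 V)) : SimpleGraph V where
  Adj u v := u ≠ v ∧ s(u, v) ∈ F
  symm := by
    constructor
    intro u v h
    refine ⟨Ne.symm h.1, ?_⟩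
    rw [Sym2.eq_swap]
    exact h.2
  loopless := by constructor; intro v h; exact h.1 rfl

/-- The set of vertices incident to at least one edge of `F` (denoted `V[F]` in the paper). -/
def supp (F : Finset (Sym2 V)) : Set V := {v | ∃ e ∈ F, v ∈ e}

/-- A Steiner forest `F` is feasible for the terminal pairs `T` if it connects every pair. -/
def Feasible (F : Finset (Sym2 V)) (T : Finset (V × V)) : Prop :=
  ∀ p ∈ T, (graphOf F).Reachable p.1 p.2

/-- Total edge cost `d(F)`. -/
def cost (d : Sym2 V → ℝ) (F : Finset (Sym2 V)) : ℝ := ∑ e ∈ F, d e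

/-- `A` is a tree (on its vertex support): loopless edges, acyclic, connected on `V[A]`. -/
def IsTreeSol (A : Finset (Sym2 V)) : Prop :=
  (∀ e ∈ A, ¬ e.IsDiag) ∧ (graphOf A).IsAcyclic ∧
    ∀ u ∈ supp A, ∀ v ∈ supp A, (graphOf A).Reachable u v

/-- Shortest-path distance between `u` and `v` in the graph with edge set `Eall`
and edge lengths `d`. -/
noncomputable def wdist (Eall : Finset (Sym2 V)) (d : Sym2 V → ℝ) (u v : V) : ℝ :=
  ⨅ p : (graphOf Eall).Walk u v, (p.edges.map d).sum

/-- Width of a vertex set `W`: the largest shortest-path distance of a terminal pair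
whose two members both lie in `W`. -/
noncomputable def widthSet (Eall : Finset (Sym2 V)) (d : Sym2 V → ℝ) (T : Finset (V × V))
    (W : Set V) : ℝ :=
  sSup {x : ℝ | ∃ p ∈ T, p.1 ∈ W ∧ p.2 ∈ W ∧ x = wdist Eall d p.1 p.2}

/-- Total width `w(F)`: the sum of the widths of the connected components of `F`. -/
noncomputable def totalWidth (Eall : Finset (Sym2 V)) (d : Sym2 V → ℝ) (T : Finset (V × V))
    (F : Finset (Sym2 V)) : ℝ :=
  ∑ᶠ c : (graphOf F).ConnectedComponent, widthSet Eall d T c.supp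

/-- The potential `φ(F) = d(F) + w(F)`. -/
noncomputable def phi (Eall : Finset (Sym2 V)) (d : Sym2 V → ℝ) (T : Finset (V × V))
    (F : Finset (Sym2 V)) : ℝ :=
  cost d F + totalWidth Eall d T F

/-- Some edge of `F` leaves the vertex set `W`. -/
def leavesSet (F : Finset (Sym2 V)) (W : Set V) : Prop :=
  ∃ g ∈ F, ∃ x y : V, g = s(x, y) ∧ x ∈ W ∧ y ∉ W

/-- `T_{e,f}`: the connected component of `A ∖ {e,f}` containing the interior of the
unique `e`–`f` path of the tree `A`; equivalently, the component containing an endpoint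
of `e` together with an endpoint of `f`. -/
def midComp (A : Finset (Sym2 V)) (e f : Sym2 V) : Set V :=
  {v | ∃ x ∈ e, ∃ y ∈ f,
    (graphOf (A \ {e, f})).Reachable x y ∧ (graphOf (A \ {e, f})).Reachable x v}

/-- `e` and `f` are compatible w.r.t. `F` (`e ~cp f`). -/
def Compatible (A F : Finset (Sym2 V)) (e f : Sym2 V) : Prop :=
  e = f ∨ ¬ leavesSet F (midComp A e f)

/-- `e` is safe: some `F`-edge crosses between the two components of `A ∖ {e}`. -/
def Safe (A F : Finset (Sym2 V)) (e : Sym2 V) : Prop :=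
  ∃ g ∈ F, ∃ x y : V, g = s(x, y) ∧ x ≠ y ∧ ¬ (graphOf (A.erase e)).Reachable x y

/-- `e` is essential: removing it from `A` destroys feasibility. -/
def Essential (A : Finset (Sym2 V)) (T : Finset (V × V)) (e : Sym2 V) : Prop :=
  ¬ Feasible (A.erase e) T

/-- The compatibility class of the edge `e` of `A`. -/
noncomputable def cls (A F : Finset (Sym2 V)) (e : Sym2 V) : Finset (Sym2 V) :=
  A.filter (fun f => Compatible A F e f)

/-- `S_u`: the set of unsafe edges of `A`. -/
noncomputable def unsafeCls (A F : Finset (Sym2 V)) : Finset (Sym2 V) :=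
  A.filter (fun e => ¬ Safe A F e)

/-- `𝔖`: the set of compatibility classes of edges of `A`. -/
noncomputable def classes (A F : Finset (Sym2 V)) : Finset (Finset (Sym2 V)) :=
  A.image (cls A F)

/-- `e` lies on the fundamental cycle closed by adding the edge `f` to the tree `A`. -/
def onFundCycle (A : Finset (Sym2 V)) (f e : Sym2 V) : Prop :=
  e ∈ A ∧ ∀ x y : V, f = s(x, y) →
    (graphOf A).Reachable x y ∧ ¬ (graphOf (A.erase e)).Reachable x y

/-- Edge/edge swap optimality of `A` w.r.t. added edges from `Eadd` and objective `obj`: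
no swap that adds an edge `f ∈ Eadd` and removes one edge of the cycle it closes,
keeping feasibility, strictly decreases the objective. -/
def EdgeEdgeSwapOptimal (Eadd : Finset (Sym2 V)) (T : Finset (V × V))
    (obj : Finset (Sym2 V) → ℝ) (A : Finset (Sym2 V)) : Prop :=
  ∀ f ∈ Eadd, ∀ e, onFundCycle A f e →
    Feasible (A.erase e ∪ {f}) T → obj A ≤ obj (A.erase e ∪ {f})

/-- Edge/set swap optimality of `A` w.r.t. added edges from `Eadd` and objective `obj`:
no swap that adds an edge `f ∈ Eadd` and removes a set `S` of edges of the cycle it closes,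
keeping feasibility, strictly decreases the objective. -/
def EdgeSetSwapOptimal (Eadd : Finset (Sym2 V)) (T : Finset (V × V))
    (obj : Finset (Sym2 V) → ℝ) (A : Finset (Sym2 V)) : Prop :=
  ∀ f ∈ Eadd, ∀ S ⊆ A, (∀ e ∈ S, onFundCycle A f e) →
    Feasible ((A \ S) ∪ {f}) T → obj A ≤ obj ((A \ S) ∪ {f})

/-- Removing swap optimality: deleting any (feasibility preserving) edge set from `A`
does not strictly decrease the objective. -/
def RemovingSwapOptimal (T : Finset (V × V))
    (obj : Finset (Sym2 V) → ℝ) (A : Finset (Sym2 V)) : Prop :=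
  ∀ S ⊆ A, Feasible (A \ S) T → obj A ≤ obj (A \ S)

/-- Path/set swap optimality of `A`: for vertices `u, v` in the same component of `A`,
adding a set `P ⊆ Eadd` of edges (along a `u`–`v` connection) and removing a set `S` of
edges of the component of `u`, in a way that keeps `u,v` connected and the solution
feasible, does not strictly decrease the objective. -/
def PathSetSwapOptimal (Eadd : Finset (Sym2 V)) (T : Finset (V × V))
    (obj : Finset (Sym2 V) → ℝ) (A : Finset (Sym2 V)) : Prop :=
  ∀ u v : V, (graphOf A).Reachable u v →
    ∀ P : Finset (Sym2 V), P ⊆ Eadd → ∀ S ⊆ A,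
      (∀ e ∈ S, ∃ x ∈ e, (graphOf A).Reachable u x) →
      (graphOf ((A \ S) ∪ P)).Reachable u v →
      Feasible ((A \ S) ∪ P) T → obj A ≤ obj ((A \ S) ∪ P)

/-- A connected component `c` of `A ∖ S` is an *inner* component for the class `S`
if it touches (at least) two distinct edges of `S`. -/
def innerComp (A S : Finset (Sym2 V)) (c : (graphOf (A \ S)).ConnectedComponent) : Prop :=
  ∃ e ∈ S, ∃ e' ∈ S, e ≠ e' ∧ (∃ x ∈ e, (graphOf (A \ S)).connectedComponentMk x = c) ∧
    ∃ y ∈ e', (graphOf (A \ S)).connectedComponentMk y = c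

/-- The sum of the widths of the inner components `E_{S,i}`, `i ∈ In_S`, of the class `S`. -/
noncomputable def innerWidthSum (Eall : Finset (Sym2 V)) (d : Sym2 V → ℝ) (T : Finset (V × V))
    (A S : Finset (Sym2 V)) : ℝ :=
  ∑ᶠ c : (graphOf (A \ S)).ConnectedComponent,
    if innerComp A S c then widthSet Eall d T c.supp else 0

/-- `index(E')` for a vertex set `W`: the largest index `i` (in the enumeration `tp` of the
terminal pairs by nondecreasing distance) of a terminal pair lying entirely inside `W`. -/
noncomputable def idxOf {nt : ℕ} (tp : Fin nt → V × V) (W : Set V) : ℕ :=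
  sSup {i : ℕ | ∃ h : i < nt, (tp ⟨i, h⟩).1 ∈ W ∧ (tp ⟨i, h⟩).2 ∈ W}

/-- The finite vertex support of an edge set. -/
def suppF (B : Finset (Sym2 V)) : Finset V :=
  Finset.univ.filter (fun v => ∃ e ∈ B, v ∈ e)

/-- `e` crosses between two different connected components of `A`. -/
def crossingEdge (A : Finset (Sym2 V)) (e : Sym2 V) : Prop :=
  ∀ x y : V, e = s(x, y) → ¬ (graphOf A).Reachable x y

/-- The components of `A` touched by the edge set `B`, i.e. the nodes of `G_A`
incident to `B`. -/
noncomputable def touched (A B : Finset (Sym2 V)) :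
    Finset ((graphOf A).ConnectedComponent) :=
  (suppF B).image ((graphOf A).connectedComponentMk)

/-- `B` is (the edge set of) a tree in the contracted multigraph `G_A`: all its edges cross
between components of `A`, it is connected (through the components of `A` it touches), and
it has one edge less than the number of components it touches. -/
def IsGATree (A B : Finset (Sym2 V)) : Prop :=
  (∀ e ∈ B, crossingEdge A e) ∧ (touched A B).card = B.card + 1 ∧
    ∀ x ∈ suppF B, ∀ y ∈ suppF B, (graphOf (A ∪ B)).Reachable x y

/-- `A` is `c`-approximate connecting move optimal: for every tree `B` in `G_A` (with edges
taken from `Emoves`), the total width of the components it connects, minus the largest of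
these widths, is at most `c` times the length of the tree. -/
def ConnApproxOptimal (Emoves Eall : Finset (Sym2 V)) (d : Sym2 V → ℝ) (T : Finset (V × V))
    (c : ℝ) (A : Finset (Sym2 V)) : Prop :=
  ∀ B ⊆ Emoves, IsGATree A B →
    (∑ t ∈ touched A B, widthSet Eall d T t.supp)
      - (⨆ t ∈ touched A B, widthSet Eall d T t.supp) ≤ c * ∑ e ∈ B, d e

section Stmt3Helpers

set_option linter.unusedSectionVars false
set_option linter.unusedVariables false

variable {A : Finset (Sym2 V)}

private lemma sym2_rep (z : Sym2 V) : ∃ a b, z = s(a, b) :=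
  Sym2.ind (f := fun z => ∃ a b, z = s(a, b)) (fun a b => ⟨a, b, rfl⟩) z

private lemma graphOf_adj {B : Finset (Sym2 V)} {u v : V} :
    (graphOf B).Adj u v ↔ u ≠ v ∧ s(u, v) ∈ B := Iff.rfl

private lemma graphOf_mono {B C : Finset (Sym2 V)} (h : B ⊆ C) : graphOf B ≤ graphOf C := by
  intro u v huv
  rw [graphOf_adj] at huv ⊢
  exact ⟨huv.1, h huv.2⟩

private lemma cross_walk {B : Finset (Sym2 V)} {c d u v : V}
    (w : (graphOf B).Walk u v) :
    (graphOf (B.erase s(c, d))).Reachable u v ∨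
      ((graphOf (B.erase s(c, d))).Reachable u c ∧ (graphOf (B.erase s(c, d))).Reachable d v) ∨
      ((graphOf (B.erase s(c, d))).Reachable u d ∧ (graphOf (B.erase s(c, d))).Reachable c v) := by
  induction w with
  | nil => exact Or.inl (SimpleGraph.Reachable.refl _)
  | @cons u x v h p ih =>
    by_cases hcd : s(u, x) = s(c, d)
    · rw [Sym2.eq_iff] at hcd
      rcases hcd with ⟨rfl, rfl⟩ | ⟨rfl, rfl⟩
      · rcases ih with h1 | ⟨h1, h2⟩ | ⟨h1, h2⟩
        · exact Or.inr (Or.inl ⟨SimpleGraph.Reachable.refl _, h1⟩)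
        · exact Or.inl (h1.symm.trans h2)
        · exact Or.inl h2
      · rcases ih with h1 | ⟨h1, h2⟩ | ⟨h1, h2⟩
        · exact Or.inr (Or.inr ⟨SimpleGraph.Reachable.refl _, h1⟩)
        · exact Or.inl h2
        · exact Or.inl (h1.symm.trans h2)
    · have hadj : (graphOf (B.erase s(c, d))).Adj u x := by
        rw [graphOf_adj] at h ⊢
        exact ⟨h.1, Finset.mem_erase.mpr ⟨hcd, h.2⟩⟩
      rcases ih with h1 | ⟨h1, h2⟩ | ⟨h1, h2⟩
      · exact Or.inl (hadj.reachable.trans h1)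
      · exact Or.inr (Or.inl ⟨hadj.reachable.trans h1, h2⟩)
      · exact Or.inr (Or.inr ⟨hadj.reachable.trans h1, h2⟩)

private lemma cross {B : Finset (Sym2 V)} {f : Sym2 V} {c d u v : V} (hf : f = s(c, d))
    (h : (graphOf B).Reachable u v) :
    (graphOf (B.erase f)).Reachable u v ∨
      ((graphOf (B.erase f)).Reachable u c ∧ (graphOf (B.erase f)).Reachable d v) ∨
      ((graphOf (B.erase f)).Reachable u d ∧ (graphOf (B.erase f)).Reachable c v) := by
  subst hf
  exact h.elim fun w => cross_walk w

private lemma not_reach_erase (hac : (graphOf A).IsAcyclic) {e : Sym2 V} {a b : V}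
    (he : e ∈ A) (hea : e = s(a, b)) (hab : a ≠ b) :
    ¬ (graphOf (A.erase e)).Reachable a b := by
  subst hea
  intro h
  have hadj : (graphOf A).Adj a b := by rw [graphOf_adj]; exact ⟨hab, he⟩
  have hbr := (SimpleGraph.isAcyclic_iff_forall_adj_isBridge.mp hac) hadj
  rw [SimpleGraph.isBridge_iff] at hbr
  refine hbr (h.mono ?_)
  intro u v huv
  rw [graphOf_adj] at huv
  rw [SimpleGraph.deleteEdges_adj]
  refine ⟨by rw [graphOf_adj]; exact ⟨huv.1, (Finset.mem_erase.mp huv.2).2⟩, ?_⟩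
  intro hm
  exact (Finset.mem_erase.mp huv.2).1 (by simpa using hm)

private lemma not_both (hac : (graphOf A).IsAcyclic) {e : Sym2 V} {a b v : V}
    (he : e ∈ A) (hea : e = s(a, b)) (hab : a ≠ b)
    (h1 : (graphOf (A.erase e)).Reachable a v) (h2 : (graphOf (A.erase e)).Reachable b v) :
    False :=
  not_reach_erase hac he hea hab (h1.trans h2.symm)

private lemma reach_adj {f e : Sym2 V} {c d : V} (hf : f ∈ A) (hfc : f = s(c, d)) (hcd : c ≠ d)
    (hfe : f ≠ e) : (graphOf (A.erase e)).Reachable c d := by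
  refine SimpleGraph.Adj.reachable ?_
  rw [graphOf_adj]
  exact ⟨hcd, Finset.mem_erase.mpr ⟨by rw [← hfc]; exact hfe, by rw [← hfc]; exact hf⟩⟩

private lemma reach_side (hcon : ∀ u ∈ supp A, ∀ v ∈ supp A, (graphOf A).Reachable u v)
    {e : Sym2 V} {a b v : V} (he : e ∈ A) (hea : e = s(a, b)) (hv : v ∈ supp A) :
    (graphOf (A.erase e)).Reachable a v ∨ (graphOf (A.erase e)).Reachable b v := by
  have haS : a ∈ supp A := ⟨e, he, by rw [hea]; exact Sym2.mem_mk_left a b⟩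
  rcases cross hea (hcon a haS v hv) with h | ⟨h1, h2⟩ | ⟨h1, h2⟩
  · exact Or.inl h
  · exact Or.inr h2
  · exact Or.inl h2

private lemma side_preserved (hac : (graphOf A).IsAcyclic) {e f : Sym2 V} {a b c d : V}
    (he : e ∈ A) (hea : e = s(a, b)) (hab : a ≠ b)
    (hf : f ∈ A) (hfc : f = s(c, d)) (hfe : f ≠ e)
    (hc : (graphOf (A.erase e)).Reachable b c) (hd : (graphOf (A.erase e)).Reachable b d)
    {v : V} (hv : (graphOf (A.erase e)).Reachable a v) :
    (graphOf (A.erase f)).Reachable a v := by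
  rcases cross hfc hv with h | ⟨h1, h2⟩ | ⟨h1, h2⟩
  · exact h.mono (graphOf_mono (Finset.erase_subset_erase _ (Finset.erase_subset _ _)))
  · exact absurd ((h1.mono (graphOf_mono (Finset.erase_subset _ _))).trans hc.symm)
      (not_reach_erase hac he hea hab)
  · exact absurd ((h1.mono (graphOf_mono (Finset.erase_subset _ _))).trans hd.symm)
      (not_reach_erase hac he hea hab)

private lemma mem_midComp (hac : (graphOf A).IsAcyclic) {e g : Sym2 V} {a b p q : V}
    (he : e ∈ A) (hg : g ∈ A) (hea : e = s(a, b)) (hgp : g = s(p, q))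
    (hab : a ≠ b) (hpq : p ≠ q) (hne : e ≠ g)
    (hbp : (graphOf (A.erase e)).Reachable b p) (hpb : (graphOf (A.erase g)).Reachable p b)
    (v : V) :
    v ∈ midComp A e g ↔
      ((graphOf (A.erase e)).Reachable b v ∧ (graphOf (A.erase g)).Reachable p v) := by
  have hAA : A \ {e, g} = (A.erase e).erase g := by
    ext z
    simp only [Finset.mem_sdiff, Finset.mem_insert, Finset.mem_singleton, Finset.mem_erase]
    tauto
  have hmono1 : (A.erase e).erase g ⊆ A.erase e := Finset.erase_subset _ _
  have hmono2 : (A.erase e).erase g ⊆ A.erase g := by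
    intro z hz
    rcases Finset.mem_erase.mp hz with ⟨h1, h2⟩
    exact Finset.mem_erase.mpr ⟨h1, (Finset.mem_erase.mp h2).2⟩
  have hpq' : (graphOf (A.erase e)).Reachable p q := reach_adj hg hgp hpq (Ne.symm hne)
  have key : ∀ w, (graphOf (A.erase e)).Reachable b w → (graphOf (A.erase g)).Reachable p w →
      (graphOf ((A.erase e).erase g)).Reachable b w := by
    intro w h1 h2
    rcases cross hgp h1 with h | ⟨k1, k2⟩ | ⟨k1, k2⟩
    · exact h
    · exact absurd (h2.trans (k2.mono (graphOf_mono hmono2)).symm)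
        (not_reach_erase hac hg hgp hpq)
    · exact absurd (hpb.trans (k1.mono (graphOf_mono hmono2)))
        (not_reach_erase hac hg hgp hpq)
  constructor
  · intro hv
    simp only [midComp, Set.mem_setOf_eq] at hv
    obtain ⟨x, hxe, y, hyg, hxy, hxv⟩ := hv
    rw [hAA] at hxy hxv
    rw [hea, Sym2.mem_iff] at hxe
    rcases hxe with rfl | rfl
    · exfalso
      rw [hgp, Sym2.mem_iff] at hyg
      have hxy' := hxy.mono (graphOf_mono hmono1)
      rcases hyg with rfl | rfl
      · exact not_both hac he hea hab hxy' hbp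
      · exact not_both hac he hea hab hxy' (hbp.trans hpq')
    · exact ⟨hxv.mono (graphOf_mono hmono1), hpb.trans (hxv.mono (graphOf_mono hmono2))⟩
  · rintro ⟨h1, h2⟩
    simp only [midComp, Set.mem_setOf_eq]
    refine ⟨b, by rw [hea]; exact Sym2.mem_mk_right a b,
      p, by rw [hgp]; exact Sym2.mem_mk_left p q, ?_, ?_⟩
    · rw [hAA]; exact key p hbp (SimpleGraph.Reachable.refl _)
    · rw [hAA]; exact key v h1 h2

private lemma midComp_comm (e f : Sym2 V) : midComp A e f = midComp A f e := by
  have hp : ({e, f} : Finset (Sym2 V)) = {f, e} := Finset.pair_comm e f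
  ext v
  simp only [midComp, Set.mem_setOf_eq, hp]
  constructor
  · rintro ⟨x, hx, y, hy, h1, h2⟩; exact ⟨y, hy, x, hx, h1.symm, h1.symm.trans h2⟩
  · rintro ⟨x, hx, y, hy, h1, h2⟩; exact ⟨y, hy, x, hx, h1.symm, h1.symm.trans h2⟩

end Stmt3Helpers

section Stmt3Main

set_option linter.unusedSectionVars false
set_option linter.unusedVariables false

variable {A F : Finset (Sym2 V)}

private lemma caseI
    (hac : (graphOf A).IsAcyclic)
    (hcon : ∀ u ∈ supp A, ∀ v ∈ supp A, (graphOf A).Reachable u v)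
    {e f g : Sym2 V} {a b c d p q x y : V}
    (he : e ∈ A) (hf : f ∈ A) (hg : g ∈ A)
    (hea : e = s(a, b)) (hfc : f = s(c, d)) (hgp : g = s(p, q))
    (hab : a ≠ b) (hcd : c ≠ d) (hpq : p ≠ q)
    (hfe : f ≠ e) (hfgne : f ≠ g) (heg : e ≠ g)
    (hbp : (graphOf (A.erase e)).Reachable b p)
    (hpb : (graphOf (A.erase g)).Reachable p b)
    (hac' : (graphOf (A.erase e)).Reachable a c)
    (hcp : (graphOf (A.erase f)).Reachable c p)
    (hef : ¬ leavesSet F (midComp A e f))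
    (hfg : ¬ leavesSet F (midComp A f g))
    (hxyF : s(x, y) ∈ F) (hyS : y ∈ supp A)
    (hx : x ∈ midComp A e g) (hy : y ∉ midComp A e g) : False := by
  have hcdAe : (graphOf (A.erase e)).Reachable c d := reach_adj hf hfc hcd hfe
  have hpqAe : (graphOf (A.erase e)).Reachable p q := reach_adj hg hgp hpq (Ne.symm heg)
  have hbaAg : (graphOf (A.erase g)).Reachable b a := (reach_adj he hea hab heg).symm
  have hbaAf : (graphOf (A.erase f)).Reachable b a := (reach_adj he hea hab (Ne.symm hfe)).symm
  have had : (graphOf (A.erase e)).Reachable a d := hac'.trans hcdAe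
  have hbq : (graphOf (A.erase e)).Reachable b q := hbp.trans hpqAe
  have Hg : ∀ v, (graphOf (A.erase e)).Reachable a v → (graphOf (A.erase g)).Reachable a v :=
    fun v hv => side_preserved hac he hea hab hg hgp (Ne.symm heg) hbp hbq hv
  have Hf : ∀ v, (graphOf (A.erase e)).Reachable b v → (graphOf (A.erase f)).Reachable b v :=
    fun v hv => side_preserved hac he (hea.trans Sym2.eq_swap) hab.symm hf hfc hfe hac' had hv
  have hpa : (graphOf (A.erase g)).Reachable p a := hpb.trans hbaAg
  have hcb : (graphOf (A.erase f)).Reachable c b := hcp.trans (Hf p hbp).symm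
  have hcaAf : (graphOf (A.erase f)).Reachable c a := hcb.trans hbaAf
  have hpc : (graphOf (A.erase g)).Reachable p c := hpa.trans (Hg c hac')
  have Meg := fun v => mem_midComp hac he hg hea hgp hab hpq heg hbp hpb v
  have Mfg := fun v => mem_midComp hac hf hg (hfc.trans Sym2.eq_swap) hgp hcd.symm hpq hfgne hcp hpc v
  have Mef := fun v => mem_midComp hac he hf (hea.trans Sym2.eq_swap) hfc hab.symm hcd (Ne.symm hfe) hac' hcaAf v
  obtain ⟨hxb, hxp⟩ := (Meg x).mp hx
  have hxf : (graphOf (A.erase f)).Reachable c x := hcb.trans (Hf x hxb)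
  have hxMfg : x ∈ midComp A f g := (Mfg x).mpr ⟨hxf, hxp⟩
  rcases reach_side hcon hg hgp hyS with hyp | hyq
  · have hyb : ¬ (graphOf (A.erase e)).Reachable b y := fun hb => hy ((Meg y).mpr ⟨hb, hyp⟩)
    have hya : (graphOf (A.erase e)).Reachable a y := by
      rcases reach_side hcon he hea hyS with h | h
      · exact h
      · exact absurd h hyb
    rcases reach_side hcon hf hfc hyS with hyc | hyd
    · have hyMef : y ∈ midComp A e f := (Mef y).mpr ⟨hya, hyc⟩
      have hxMef : x ∉ midComp A e f := fun hm =>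
        not_both hac he hea hab ((Mef x).mp hm).1 hxb
      exact hef ⟨s(x, y), hxyF, y, x, Sym2.eq_swap, hyMef, hxMef⟩
    · have hyMfg : y ∉ midComp A f g := fun hm =>
        not_both hac hf hfc hcd ((Mfg y).mp hm).1 hyd
      exact hfg ⟨s(x, y), hxyF, x, y, rfl, hxMfg, hyMfg⟩
  · have hyMfg : y ∉ midComp A f g := fun hm =>
      not_both hac hg hgp hpq ((Mfg y).mp hm).2 hyq
    exact hfg ⟨s(x, y), hxyF, x, y, rfl, hxMfg, hyMfg⟩

private lemma caseIII
    (hac : (graphOf A).IsAcyclic)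
    (hcon : ∀ u ∈ supp A, ∀ v ∈ supp A, (graphOf A).Reachable u v)
    {e f g : Sym2 V} {a b c d p q x y : V}
    (he : e ∈ A) (hf : f ∈ A) (hg : g ∈ A)
    (hea : e = s(a, b)) (hfc : f = s(c, d)) (hgp : g = s(p, q))
    (hab : a ≠ b) (hcd : c ≠ d) (hpq : p ≠ q)
    (hfe : f ≠ e) (hfgne : f ≠ g) (heg : e ≠ g)
    (hbp : (graphOf (A.erase e)).Reachable b p)
    (hpb : (graphOf (A.erase g)).Reachable p b)
    (hbc : (graphOf (A.erase e)).Reachable b c)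
    (hbd : (graphOf (A.erase e)).Reachable b d)
    (hpc : (graphOf (A.erase g)).Reachable p c)
    (hpd : (graphOf (A.erase g)).Reachable p d)
    (hca : (graphOf (A.erase f)).Reachable c a)
    (hef : ¬ leavesSet F (midComp A e f))
    (hfg : ¬ leavesSet F (midComp A f g))
    (hxyF : s(x, y) ∈ F) (hxS : x ∈ supp A) (hyS : y ∈ supp A)
    (hx : x ∈ midComp A e g) (hy : y ∉ midComp A e g) : False := by
  have hpqAe : (graphOf (A.erase e)).Reachable p q := reach_adj hg hgp hpq (Ne.symm heg)
  have hbq : (graphOf (A.erase e)).Reachable b q := hbp.trans hpqAe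
  have habAg : (graphOf (A.erase g)).Reachable a b := reach_adj he hea hab heg
  have hpa : (graphOf (A.erase g)).Reachable p a := hpb.trans habAg.symm
  have habAf : (graphOf (A.erase f)).Reachable a b := reach_adj he hea hab (Ne.symm hfe)
  have hpqAf : (graphOf (A.erase f)).Reachable p q := reach_adj hg hgp hpq (Ne.symm hfgne)
  have hcb : (graphOf (A.erase f)).Reachable c b := hca.trans habAf
  have Hae_f : ∀ v, (graphOf (A.erase e)).Reachable a v → (graphOf (A.erase f)).Reachable a v :=
    fun v hv => side_preserved hac he hea hab hf hfc hfe hbc hbd hv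
  have Hgq_f : ∀ v, (graphOf (A.erase g)).Reachable q v → (graphOf (A.erase f)).Reachable q v :=
    fun v hv => side_preserved hac hg (hgp.trans Sym2.eq_swap) hpq.symm hf hfc hfgne hpc hpd hv
  have Haeg : ∀ v, (graphOf (A.erase e)).Reachable a v → (graphOf (A.erase g)).Reachable a v :=
    fun v hv => side_preserved hac he hea hab hg hgp (Ne.symm heg) hbp hbq hv
  have Hgqe : ∀ v, (graphOf (A.erase g)).Reachable q v → (graphOf (A.erase e)).Reachable q v :=
    fun v hv => side_preserved hac hg (hgp.trans Sym2.eq_swap) hpq.symm he hea heg hpa hpb hv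
  have S1 : ∀ v, (graphOf (A.erase e)).Reachable a v → (graphOf (A.erase f)).Reachable c v :=
    fun v hv => hca.trans (Hae_f v hv)
  have S3 : ∀ v, (graphOf (A.erase e)).Reachable a v → (graphOf (A.erase g)).Reachable p v :=
    fun v hv => hpa.trans (Haeg v hv)
  have Meg := fun v => mem_midComp hac he hg hea hgp hab hpq heg hbp hpb v
  have Mef := fun v => mem_midComp hac he hf hea hfc hab hcd (Ne.symm hfe) hbc hcb v
  obtain ⟨hxb, hxp⟩ := (Meg x).mp hx
  have hy' : (graphOf (A.erase e)).Reachable a y ∨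
      ((graphOf (A.erase e)).Reachable b y ∧ (graphOf (A.erase g)).Reachable q y) := by
    rcases reach_side hcon he hea hyS with h | h
    · exact Or.inl h
    · rcases reach_side hcon hg hgp hyS with h2 | h2
      · exact absurd ((Meg y).mpr ⟨h, h2⟩) hy
      · exact Or.inr ⟨h, h2⟩
  have hpS : p ∈ supp A := ⟨g, hg, by rw [hgp]; exact Sym2.mem_mk_left p q⟩
  rcases reach_side hcon hf hfc hpS with hcp | hdp
  · -- subcase A : c faces g as well (f hanging)
    have Mfg := fun v => mem_midComp hac hf hg (hfc.trans Sym2.eq_swap) hgp hcd.symm hpq hfgne hcp hpc v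
    have hcq : (graphOf (A.erase f)).Reachable c q := hcp.trans hpqAf
    rcases reach_side hcon hf hfc hxS with hxc | hxd
    · have hxMef := (Mef x).mpr ⟨hxb, hxc⟩
      have hxMfg := (Mfg x).mpr ⟨hxc, hxp⟩
      rcases hy' with hya | ⟨hyb, hyq⟩
      · have hyMef : y ∉ midComp A e f := fun hm =>
          not_both hac he hea hab hya ((Mef y).mp hm).1
        exact hef ⟨s(x, y), hxyF, x, y, rfl, hxMef, hyMef⟩
      · have hyMfg : y ∉ midComp A f g := fun hm =>
          not_both hac hg hgp hpq ((Mfg y).mp hm).2 hyq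
        exact hfg ⟨s(x, y), hxyF, x, y, rfl, hxMfg, hyMfg⟩
    · rcases hy' with hya | ⟨hyb, hyq⟩
      · have hyMfg : y ∈ midComp A f g := (Mfg y).mpr ⟨S1 y hya, S3 y hya⟩
        have hxMfg : x ∉ midComp A f g := fun hm =>
          not_both hac hf hfc hcd ((Mfg x).mp hm).1 hxd
        exact hfg ⟨s(x, y), hxyF, y, x, Sym2.eq_swap, hyMfg, hxMfg⟩
      · have hyMef : y ∈ midComp A e f := (Mef y).mpr ⟨hyb, hcq.trans (Hgq_f y hyq)⟩
        have hxMef : x ∉ midComp A e f := fun hm =>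
          not_both hac hf hfc hcd ((Mef x).mp hm).2 hxd
        exact hef ⟨s(x, y), hxyF, y, x, Sym2.eq_swap, hyMef, hxMef⟩
  · -- subcase B : d faces g (f separates e from g)
    have Mfg := fun v => mem_midComp hac hf hg hfc hgp hcd hpq hfgne hdp hpd v
    have hdq : (graphOf (A.erase f)).Reachable d q := hdp.trans hpqAf
    rcases reach_side hcon hf hfc hxS with hxc | hxd
    · have hxMef := (Mef x).mpr ⟨hxb, hxc⟩
      rcases hy' with hya | ⟨hyb, hyq⟩
      · have hyMef : y ∉ midComp A e f := fun hm =>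
          not_both hac he hea hab hya ((Mef y).mp hm).1
        exact hef ⟨s(x, y), hxyF, x, y, rfl, hxMef, hyMef⟩
      · have hyd : (graphOf (A.erase f)).Reachable d y := hdq.trans (Hgq_f y hyq)
        have hyMef : y ∉ midComp A e f := fun hm =>
          not_both hac hf hfc hcd ((Mef y).mp hm).2 hyd
        exact hef ⟨s(x, y), hxyF, x, y, rfl, hxMef, hyMef⟩
    · have hxMfg := (Mfg x).mpr ⟨hxd, hxp⟩
      rcases hy' with hya | ⟨hyb, hyq⟩
      · have hyMfg : y ∉ midComp A f g := fun hm =>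
          not_both hac hf hfc hcd (S1 y hya) ((Mfg y).mp hm).1
        exact hfg ⟨s(x, y), hxyF, x, y, rfl, hxMfg, hyMfg⟩
      · have hyMfg : y ∉ midComp A f g := fun hm =>
          not_both hac hg hgp hpq ((Mfg y).mp hm).2 hyq
        exact hfg ⟨s(x, y), hxyF, x, y, rfl, hxMfg, hyMfg⟩

private lemma keyLemma
    (hdiag : ∀ e ∈ A, ¬ e.IsDiag)
    (hac : (graphOf A).IsAcyclic)
    (hcon : ∀ u ∈ supp A, ∀ v ∈ supp A, (graphOf A).Reachable u v)
    {e f g : Sym2 V} {a b p q x y : V}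
    (he : e ∈ A) (hf : f ∈ A) (hg : g ∈ A)
    (hea : e = s(a, b)) (hgp : g = s(p, q))
    (hab : a ≠ b) (hpq : p ≠ q)
    (hfe : f ≠ e) (hfgne : f ≠ g) (heg : e ≠ g)
    (hbp : (graphOf (A.erase e)).Reachable b p)
    (hpb : (graphOf (A.erase g)).Reachable p b)
    (hef : ¬ leavesSet F (midComp A e f))
    (hfg : ¬ leavesSet F (midComp A f g))
    (hxyF : s(x, y) ∈ F) (hxS : x ∈ supp A) (hyS : y ∈ supp A)
    (hx : x ∈ midComp A e g) (hy : y ∉ midComp A e g) : False := by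
  obtain ⟨c, d, hfc⟩ := sym2_rep f
  have hcd : c ≠ d := fun h => hdiag f hf (by rw [hfc, Sym2.mk_isDiag_iff]; exact h)
  have hcS : c ∈ supp A := ⟨f, hf, by rw [hfc]; exact Sym2.mem_mk_left c d⟩
  have hpS : p ∈ supp A := ⟨g, hg, by rw [hgp]; exact Sym2.mem_mk_left p q⟩
  have haS : a ∈ supp A := ⟨e, he, by rw [hea]; exact Sym2.mem_mk_left a b⟩
  have hbS : b ∈ supp A := ⟨e, he, by rw [hea]; exact Sym2.mem_mk_right a b⟩
  have hcdAe : (graphOf (A.erase e)).Reachable c d := reach_adj hf hfc hcd hfe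
  have hcdAg : (graphOf (A.erase g)).Reachable c d := reach_adj hf hfc hcd hfgne
  rcases reach_side hcon he hea hcS with hac' | hbc
  · -- Case I : f beyond e
    have had : (graphOf (A.erase e)).Reachable a d := hac'.trans hcdAe
    rcases reach_side hcon hf hfc hpS with hcp | hdp
    · exact caseI hac hcon he hf hg hea hfc hgp hab hcd hpq hfe hfgne heg hbp hpb hac' hcp
        hef hfg hxyF hyS hx hy
    · exact caseI hac hcon he hf hg hea (hfc.trans Sym2.eq_swap) hgp hab hcd.symm hpq hfe hfgne heg
        hbp hpb had hdp hef hfg hxyF hyS hx hy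
  · have hbd : (graphOf (A.erase e)).Reachable b d := hbc.trans hcdAe
    rcases reach_side hcon hg hgp hcS with hpc | hqc
    · -- Case III : f in the middle
      have hpd : (graphOf (A.erase g)).Reachable p d := hpc.trans hcdAg
      rcases reach_side hcon hf hfc haS with hca | hda
      · exact caseIII hac hcon he hf hg hea hfc hgp hab hcd hpq hfe hfgne heg hbp hpb
          hbc hbd hpc hpd hca hef hfg hxyF hxS hyS hx hy
      · exact caseIII hac hcon he hf hg hea (hfc.trans Sym2.eq_swap) hgp hab hcd.symm hpq hfe hfgne
          heg hbp hpb hbd hbc hpd hpc hda hef hfg hxyF hxS hyS hx hy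
    · -- Case II : f beyond g, swap the roles of e and g
      have hqd : (graphOf (A.erase g)).Reachable q d := hqc.trans hcdAg
      have hef' : ¬ leavesSet F (midComp A g f) := by rw [midComp_comm]; exact hfg
      have hfg' : ¬ leavesSet F (midComp A f e) := by rw [midComp_comm]; exact hef
      have hx' : x ∈ midComp A g e := by rw [midComp_comm]; exact hx
      have hy' : y ∉ midComp A g e := by rw [midComp_comm]; exact hy
      rcases reach_side hcon hf hfc hbS with hcb | hdb
      · exact caseI hac hcon hg hf he (hgp.trans Sym2.eq_swap) hfc (hea.trans Sym2.eq_swap)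
          hpq.symm hcd hab.symm hfgne hfe (Ne.symm heg) hpb hbp hqc hcb hef' hfg' hxyF hyS hx' hy'
      · exact caseI hac hcon hg hf he (hgp.trans Sym2.eq_swap) (hfc.trans Sym2.eq_swap)
          (hea.trans Sym2.eq_swap) hpq.symm hcd.symm hab.symm hfgne hfe (Ne.symm heg) hpb hbp
          hqd hdb hef' hfg' hxyF hyS hx' hy'

private lemma compat_trans (hAtree : IsTreeSol A) (hsupp : supp A = supp F)
    {e f g : Sym2 V} (he : e ∈ A) (hf : f ∈ A) (hg : g ∈ A)
    (hef : Compatible A F e f) (hfg : Compatible A F f g) : Compatible A F e g := by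
  obtain ⟨hdiag, hac, hcon⟩ := hAtree
  by_cases hefeq : e = f
  · subst hefeq; exact hfg
  by_cases hfgeq : f = g
  · subst hfgeq; exact hef
  by_cases heg : e = g
  · exact Or.inl heg
  rcases hef with heq | hef'
  · exact absurd heq hefeq
  rcases hfg with heq | hfg'
  · exact absurd heq hfgeq
  refine Or.inr fun hlv => ?_
  obtain ⟨ed, hedF, x, y, hedxy, hxM, hyM⟩ := hlv
  subst hedxy
  have hxS : x ∈ supp A := by rw [hsupp]; exact ⟨s(x, y), hedF, Sym2.mem_mk_left x y⟩
  have hyS : y ∈ supp A := by rw [hsupp]; exact ⟨s(x, y), hedF, Sym2.mem_mk_right x y⟩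
  obtain ⟨p0, q0, hgp0⟩ := sym2_rep g
  have hpq0 : p0 ≠ q0 := fun h => hdiag g hg (by rw [hgp0, Sym2.mk_isDiag_iff]; exact h)
  obtain ⟨a0, b0, hea0⟩ := sym2_rep e
  have hab0 : a0 ≠ b0 := fun h => hdiag e he (by rw [hea0, Sym2.mk_isDiag_iff]; exact h)
  have hp0S : p0 ∈ supp A := ⟨g, hg, by rw [hgp0]; exact Sym2.mem_mk_left p0 q0⟩
  obtain ⟨a, b, hea, hab, hbp0⟩ : ∃ a b, e = s(a, b) ∧ a ≠ b ∧
      (graphOf (A.erase e)).Reachable b p0 := by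
    rcases reach_side hcon he hea0 hp0S with h | h
    · exact ⟨b0, a0, hea0.trans Sym2.eq_swap, hab0.symm, h⟩
    · exact ⟨a0, b0, hea0, hab0, h⟩
  have hbq0 : (graphOf (A.erase e)).Reachable b q0 :=
    hbp0.trans (reach_adj hg hgp0 hpq0 (Ne.symm heg))
  have hbS : b ∈ supp A := ⟨e, he, by rw [hea]; exact Sym2.mem_mk_right a b⟩
  obtain ⟨p, q, hgp, hpq, hbp, hpb⟩ : ∃ p q, g = s(p, q) ∧ p ≠ q ∧
      (graphOf (A.erase e)).Reachable b p ∧ (graphOf (A.erase g)).Reachable p b := by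
    rcases reach_side hcon hg hgp0 hbS with h | h
    · exact ⟨p0, q0, hgp0, hpq0, hbp0, h⟩
    · exact ⟨q0, p0, hgp0.trans Sym2.eq_swap, hpq0.symm, hbq0, h⟩
  exact keyLemma hdiag hac hcon he hf hg hea hgp hab hpq (Ne.symm hefeq) hfgeq heg hbp hpb
    hef' hfg' hedF hxS hyS hxM hyM

private lemma compat_symm {e f : Sym2 V} (h : Compatible A F e f) : Compatible A F f e := by
  rcases h with rfl | h
  · exact Or.inl rfl
  · exact Or.inr (by rw [midComp_comm]; exact h)

end Stmt3Main

theorem stmt3_compatible_trans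
    (T : Finset (V × V)) (A F : Finset (Sym2 V))
    (hAfeas : Feasible A T) (hFfeas : Feasible F T)
    (hAtree : IsTreeSol A) (hsupp : supp A = supp F)
    (e f g : Sym2 V) (he : e ∈ A) (hf : f ∈ A) (hg : g ∈ A)
    (hef : Compatible A F e f) (hfg : Compatible A F f g) :
    Compatible A F e g ∧
      Equivalence (fun e₁ e₂ : {x : Sym2 V // x ∈ A} => Compatible A F e₁.1 e₂.1) := by
  refine ⟨compat_trans hAtree hsupp he hf hg hef hfg, ?_, ?_, ?_⟩
  · exact fun _ => Or.inl rfl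
  · exact fun h => compat_symm h
  · exact fun {e₁ e₂ e₃} h1 h2 => compat_trans hAtree hsupp e₁.2 e₂.2 e₃.2 h1 h2
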